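/- For a reaction network satisfying Assumptions 1 and 2: (1) the constant monomial 1 has zero coefficient in every iterated total derivative x^{(ℓ)}, ℓ ≥ 1, of every species variable x; (2) for a non-intermediate species X, the only monomials of degree 1 appearing (with nonzero coefficient) in a derivative x^{(ℓ)}, ℓ ≥ 1, are the variables w of intermediate species W that react to X, i.e., exactly the degree-one monomials appearing in ẋ. -/

import Mathlib

open MvPolynomial Finsupp

variable {σ : Type*}

/-- The total (Lie) derivative of a polynomial `φ` associated to the polynomial vector
field `f`: `φ̇ = Σ_x (∂φ/∂x)·f x`. -/
noncomputable def lieD [Fintype σ] (f : σ → MvPolynomial σ ℝ)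
    (φ : MvPolynomial σ ℝ) : MvPolynomial σ ℝ :=
  ∑ x : σ, MvPolynomial.pderiv x φ * f x

/-- Iterated total (Lie) derivative. -/
noncomputable def lieDIter [Fintype σ] (f : σ → MvPolynomial σ ℝ) :
    ℕ → MvPolynomial σ ℝ → MvPolynomial σ ℝ
  | 0, φ => φ
  | n + 1, φ => lieD f (lieDIter f n φ)

/-- Indicator of a species inside a complex, as a real number. -/
def ind [DecidableEq σ] (a x : σ) : ℝ := if a = x then 1 else 0

/-- A chemical reaction network of the structural form of Assumption 1: the connected
components are indexed by `ι`; component `i` is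
`Y i + S i 0 ⇄ U i 1 → Y i + S i 1 ⇄ U i 2 → ⋯ ⇄ U i (L i) → Y i + S i (L i)`,
with rate constants `a_{i,j}, b_{i,j}, c_{i,j}` for the reactions
`Y i + S i (j-1) → U i j`, `U i j → Y i + S i (j-1)`, `U i j → Y i + S i j`
(`1 ≤ j ≤ L i`). Only the values `S i j` for `j ≤ L i` and `U i j` for
`1 ≤ j ≤ L i` are relevant. -/
structure A1Network (σ : Type*) where
  ι : Type
  [fintypeι : Fintype ι]
  L : ι → ℕ
  Lpos : ∀ i, 1 ≤ L i
  Y : ι → σ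
  S : ι → ℕ → σ
  U : ι → ℕ → σ

attribute [instance] A1Network.fintypeι

namespace A1Network

variable [Fintype σ] [DecidableEq σ]

/-- Rate-constant index: component `i`, block `j+1` (for `j : Fin (L i)`), and
`0, 1, 2` for the constants `a, b, c` of the block. -/
def Param (N : A1Network σ) : Type := (i : N.ι) × Fin (N.L i) × Fin 3

instance (N : A1Network σ) : Fintype N.Param :=
  inferInstanceAs (Fintype ((i : N.ι) × Fin (N.L i) × Fin 3))

/-- `x` is an intermediate species of the network. -/
def inter (N : A1Network σ) (x : σ) : Prop :=
  ∃ i, ∃ j : Fin (N.L i), x = N.U i ((j : ℕ) + 1)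

/-- The non-intermediate `x₁` reacts with the non-intermediate `x₂`
(a reaction `x₁ + x₂ → U` exists). -/
def reactsWith (N : A1Network σ) (x₁ x₂ : σ) : Prop :=
  ∃ i, ∃ j : Fin (N.L i),
    (x₁ = N.Y i ∧ x₂ = N.S i (j : ℕ)) ∨ (x₂ = N.Y i ∧ x₁ = N.S i (j : ℕ))

/-- The intermediate `u` reacts to the non-intermediate `x`
(a reaction `u → x + X₂` exists). -/
def reactsTo (N : A1Network σ) (u x : σ) : Prop :=
  ∃ i, ∃ j : Fin (N.L i), u = N.U i ((j : ℕ) + 1) ∧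
    (x = N.Y i ∨ x = N.S i (j : ℕ) ∨ x = N.S i ((j : ℕ) + 1))

/-- The distinctness/uniqueness requirements of Assumption 1: the intermediates of the
entire network are pairwise distinct and distinct from all non-intermediates; the
non-intermediates of one component are pairwise distinct; each complex lies in a
unique connected component. -/
structure Assumption1 (N : A1Network σ) : Prop where
  U_inj : ∀ i (j : Fin (N.L i)) i' (j' : Fin (N.L i')),
    N.U i ((j : ℕ) + 1) = N.U i' ((j' : ℕ) + 1) → i = i' ∧ (j : ℕ) = (j' : ℕ)
  U_ne_Y : ∀ i (j : Fin (N.L i)) i', N.U i ((j : ℕ) + 1) ≠ N.Y i'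
  U_ne_S : ∀ i (j : Fin (N.L i)) i' j', j' ≤ N.L i' → N.U i ((j : ℕ) + 1) ≠ N.S i' j'
  S_inj : ∀ i j j', j ≤ N.L i → j' ≤ N.L i → N.S i j = N.S i j' → j = j'
  complex_unique : ∀ i i' j j', j ≤ N.L i → j' ≤ N.L i' →
    (∀ x : σ, ind (N.Y i) x + ind (N.S i j) x = ind (N.Y i') x + ind (N.S i' j') x) →
    i = i'

/-- `part` is a partition of the species as in Assumption 2: intermediates form class `0`;
all the substrates and products of a component lie in one class `α ≥ 1` which contains
neither the enzyme of the component nor any intermediate. -/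
def IsPartition (N : A1Network σ) (part : σ → ℕ) : Prop :=
  (∀ x, N.inter x → part x = 0) ∧
  (∀ i : N.ι, ∃ α, 1 ≤ α ∧ (∀ j, j ≤ N.L i → part (N.S i j) = α) ∧
    part (N.Y i) ≠ α ∧ part (N.Y i) ≠ 0)

/-- Assumption 2: there exists a partition as above. -/
def Assumption2 (N : A1Network σ) : Prop := ∃ part, N.IsPartition part

/-- The mass-action right-hand side of the induced dynamical system:
`ẋ = Σ_{y→y'} k_{yy'} x^y (y'-y)`. -/
noncomputable def rhs (N : A1Network σ) (k : N.Param → ℝ) (x : σ) : MvPolynomial σ ℝ :=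
  ∑ i : N.ι, ∑ j : Fin (N.L i),
    (C (k ⟨i, j, 0⟩ *
          (ind (N.U i ((j : ℕ) + 1)) x - ind (N.Y i) x - ind (N.S i (j : ℕ)) x)) *
        (X (N.Y i) * X (N.S i (j : ℕ)))
      + C (k ⟨i, j, 1⟩ *
          (ind (N.Y i) x + ind (N.S i (j : ℕ)) x - ind (N.U i ((j : ℕ) + 1)) x)) *
        X (N.U i ((j : ℕ) + 1))
      + C (k ⟨i, j, 2⟩ *
          (ind (N.Y i) x + ind (N.S i ((j : ℕ) + 1)) x - ind (N.U i ((j : ℕ) + 1)) x)) *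
        X (N.U i ((j : ℕ) + 1)))

/-- `x^{(ℓ)}(x, k)`: the `ℓ`-th iterated total derivative of the variable `x`. -/
noncomputable def deriv (N : A1Network σ) (k : N.Param → ℝ) (ℓ : ℕ) (x : σ) :
    MvPolynomial σ ℝ :=
  lieDIter (N.rhs k) ℓ (X x)

/-- The map `ψ` on rate constants is identifiable from the set of variables `T` with `D`
derivatives: whenever two positive rate vectors give the same derivatives
`x^{(ℓ)}`, `1 ≤ ℓ ≤ D`, `x ∈ T`, as polynomials, the values of `ψ` agree. -/
def IdentifiableFrom {α : Type*} (N : A1Network σ) (ψ : (N.Param → ℝ) → α)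
    (T : Set σ) (D : ℕ) : Prop :=
  ∀ k₁ k₂ : N.Param → ℝ, (∀ r, 0 < k₁ r) → (∀ r, 0 < k₂ r) →
    (∀ x ∈ T, ∀ ℓ, 1 ≤ ℓ → ℓ ≤ D → N.deriv k₁ ℓ x = N.deriv k₂ ℓ x) →
    ψ k₁ = ψ k₂


set_option linter.unusedSectionVars false

section Aux

variable [Fintype σ] [DecidableEq σ]

private lemma coeff_single_one_mul (w : σ) (p q : MvPolynomial σ ℝ) :
    MvPolynomial.coeff (single w 1) (p * q) =
      coeff 0 p * coeff (single w 1) q + coeff (single w 1) p * coeff 0 q := by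
  rw [MvPolynomial.coeff_mul, Finsupp.antidiagonal_single]
  rw [show Finset.HasAntidiagonal.antidiagonal (1 : ℕ) = {(0, 1), (1, 0)} from rfl]
  simp [add_comm]

private lemma coeff_zero_pderiv (u : σ) (φ : MvPolynomial σ ℝ) :
    coeff 0 (pderiv u φ) = coeff (single u 1) φ := by
  induction φ using MvPolynomial.induction_on' with
  | monomial s a =>
    rw [pderiv_monomial, coeff_monomial, coeff_monomial]
    rcases eq_or_ne s (single u 1) with rfl | hs
    · simp
    · rw [if_neg hs]
      rcases eq_or_ne (s - single u 1) 0 with h | h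
      · rw [if_pos h]
        have hle : s ≤ single u 1 := tsub_eq_zero_iff_le.mp h
        have hs' : s = single u (s u) := by
          ext v
          rcases eq_or_ne v u with rfl | hv
          · simp
          · have := Finsupp.le_def.mp hle v
            simp [Finsupp.single_apply, hv.symm, Ne.symm hv] at this ⊢
            omega
        have : s u = 0 := by
          rcases Nat.le_one_iff_eq_zero_or_eq_one.mp
            ((Finsupp.le_def.mp hle u).trans_eq single_eq_same) with h0 | h1
          · exact h0
          · exact absurd (hs'.trans (by rw [h1])) hs
        simp [this]
      · rw [if_neg h]
  | add p q hp hq => simp [map_add, hp, hq]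

private lemma coeff_single_one_X_mul_X (w a b : σ) :
    MvPolynomial.coeff (single w 1) ((X a : MvPolynomial σ ℝ) * X b) = 0 := by
  rw [coeff_single_one_mul]
  simp [MvPolynomial.coeff_X', Finsupp.single_eq_zero]

end Aux

section MainAux

variable [Fintype σ] [DecidableEq σ] (N : A1Network σ) (k : N.Param → ℝ)

private lemma rhs_coeff0 (u : σ) : coeff (0 : σ →₀ ℕ) (N.rhs k u) = 0 := by
  rw [← MvPolynomial.constantCoeff_eq]
  simp [rhs, map_sum]

private lemma lieD_coeff0 (φ : MvPolynomial σ ℝ) :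
    coeff (0 : σ →₀ ℕ) (lieD (N.rhs k) φ) = 0 := by
  rw [← MvPolynomial.constantCoeff_eq]
  rw [lieD, map_sum]
  refine Finset.sum_eq_zero fun u _ => ?_
  rw [map_mul]
  have : constantCoeff (N.rhs k u) = 0 := by
    rw [MvPolynomial.constantCoeff_eq]; exact N.rhs_coeff0 k u
  rw [this, mul_zero]

private lemma lieD_coeff_single (w : σ) (φ : MvPolynomial σ ℝ) :
    coeff (single w 1) (lieD (N.rhs k) φ) =
      ∑ u : σ, coeff (single u 1) φ * coeff (single w 1) (N.rhs k u) := by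
  rw [lieD, MvPolynomial.coeff_sum]
  refine Finset.sum_congr rfl fun u _ => ?_
  rw [coeff_single_one_mul, coeff_zero_pderiv, N.rhs_coeff0 k u, mul_zero, add_zero]

private lemma key1 {u w : σ} (h : coeff (single w 1) (N.rhs k u) ≠ 0) :
    ∃ i, ∃ j : Fin (N.L i), w = N.U i ((j : ℕ) + 1) ∧
      (u = N.Y i ∨ u = N.S i (j : ℕ) ∨ u = N.S i ((j : ℕ) + 1) ∨
        u = N.U i ((j : ℕ) + 1)) := by
  by_contra hc
  push_neg at hc
  apply h
  rw [rhs, MvPolynomial.coeff_sum]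
  refine Finset.sum_eq_zero fun i _ => ?_
  rw [MvPolynomial.coeff_sum]
  refine Finset.sum_eq_zero fun j _ => ?_
  rw [coeff_add, coeff_add, coeff_C_mul, coeff_C_mul, coeff_C_mul,
    coeff_single_one_X_mul_X, MvPolynomial.coeff_X']
  rcases eq_or_ne (N.U i ((j : ℕ) + 1)) w with hUw | hUw
  · obtain ⟨h1, h2, h3, h4⟩ := hc i j hUw.symm
    simp [ind, Ne.symm h1, Ne.symm h2, Ne.symm h3, Ne.symm h4]
  · rw [if_neg (by
      intro hh
      exact hUw (by
        have := Finsupp.single_left_injective (one_ne_zero (α := ℕ)) hh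
        exact this))]
    ring

private lemma key_forces (h1 : N.Assumption1) {u w : σ} (hu : N.inter u)
    (h : coeff (single w 1) (N.rhs k u) ≠ 0) : u = w := by
  obtain ⟨i, j, hw, hcase⟩ := N.key1 k h
  obtain ⟨i', j', hu'⟩ := hu
  rcases hcase with hc | hc | hc | hc
  · exact absurd (hu' ▸ hc : N.U i' ((j' : ℕ) + 1) = N.Y i) (h1.U_ne_Y i' j' i)
  · exact absurd (hu' ▸ hc : N.U i' ((j' : ℕ) + 1) = N.S i (j : ℕ))
      (h1.U_ne_S i' j' i (j : ℕ) (le_of_lt j.isLt))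
  · exact absurd (hu' ▸ hc : N.U i' ((j' : ℕ) + 1) = N.S i ((j : ℕ) + 1))
      (h1.U_ne_S i' j' i ((j : ℕ) + 1) j.isLt)
  · exact hc.trans hw.symm

private lemma deriv_one (x : σ) : N.deriv k 1 x = N.rhs k x := by
  show lieD (N.rhs k) (lieDIter (N.rhs k) 0 (X x)) = N.rhs k x
  show ∑ u : σ, pderiv u (X x) * N.rhs k u = N.rhs k x
  rw [Finset.sum_eq_single x]
  · rw [pderiv_X_self, one_mul]
  · intro u _ hu
    rw [pderiv_X_of_ne (Ne.symm hu), zero_mul]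
  · intro hx; exact absurd (Finset.mem_univ x) hx

private lemma main_formula (h1 : N.Assumption1) {x : σ} (hx : ¬ N.inter x) :
    ∀ n, ∀ w : σ, coeff (single w 1) (N.deriv k (n + 1) x) =
      (coeff (single w 1) (N.rhs k w)) ^ n * coeff (single w 1) (N.rhs k x) := by
  intro n
  induction n with
  | zero => intro w; rw [N.deriv_one k x, pow_zero, one_mul]
  | succ n ih =>
    intro w
    have hstep : N.deriv k (n + 1 + 1) x = lieD (N.rhs k) (N.deriv k (n + 1) x) := rfl
    rw [hstep, N.lieD_coeff_single k w]
    rw [Finset.sum_eq_single w]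
    · rw [ih w]; ring
    · intro u _ huw
      rw [ih u]
      rcases eq_or_ne (coeff (single u 1) (N.rhs k x)) 0 with h0 | h0
      · rw [h0, mul_zero, zero_mul]
      · rcases eq_or_ne (coeff (single w 1) (N.rhs k u)) 0 with h0' | h0'
        · rw [h0', mul_zero]
        · obtain ⟨i, j, hu, _⟩ := N.key1 k h0
          exact absurd (N.key_forces k h1 ⟨i, j, hu⟩ h0') huw
    · intro hw; exact absurd (Finset.mem_univ w) hw

end MainAux

/-- **Lemma.** For a reaction network satisfying Assumptions 1 and 2:
(1) the constant monomial has zero coefficient in every iterated total derivative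
`x^{(ℓ)}`, `ℓ ≥ 1`, of every species variable;
(2) for a non-intermediate species `X`, the only degree-one monomials appearing in a
derivative `x^{(ℓ)}`, `ℓ ≥ 1`, are the variables `w` of intermediate species `W`
reacting to `X`, i.e. exactly the degree-one monomials appearing in `ẋ`. -/
theorem constant_and_linear_monomials
    (N : A1Network σ) (h1 : N.Assumption1) (h2 : N.Assumption2)
    (k : N.Param → ℝ) (hk : ∀ r, 0 < k r) :
    (∀ x : σ, ∀ ℓ, 1 ≤ ℓ →
        MvPolynomial.coeff (0 : σ →₀ ℕ) (N.deriv k ℓ x) = 0)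
    ∧ (∀ x : σ, ¬ N.inter x → ∀ ℓ, 1 ≤ ℓ → ∀ w : σ,
        MvPolynomial.coeff (Finsupp.single w 1) (N.deriv k ℓ x) ≠ 0 →
        N.inter w ∧ N.reactsTo w x ∧
          MvPolynomial.coeff (Finsupp.single w 1) (N.deriv k 1 x) ≠ 0) := by
  constructor
  · intro x ℓ hℓ
    obtain ⟨n, rfl⟩ : ∃ n, ℓ = n + 1 := ⟨ℓ - 1, by omega⟩
    have hstep : N.deriv k (n + 1) x = lieD (N.rhs k) (lieDIter (N.rhs k) n (X x)) := rfl
    rw [hstep]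
    exact N.lieD_coeff0 k _
  · intro x hx ℓ hℓ w hw
    obtain ⟨n, rfl⟩ : ∃ n, ℓ = n + 1 := ⟨ℓ - 1, by omega⟩
    rw [N.main_formula k h1 hx n w] at hw
    have hxw : coeff (single w 1) (N.rhs k x) ≠ 0 := right_ne_zero_of_mul hw
    obtain ⟨i, j, hwU, hcase⟩ := N.key1 k hxw
    have hxcase : x = N.Y i ∨ x = N.S i (j : ℕ) ∨ x = N.S i ((j : ℕ) + 1) := by
      rcases hcase with h | h | h | h
      · exact Or.inl h
      · exact Or.inr (Or.inl h)
      · exact Or.inr (Or.inr h)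
      · exact absurd ⟨i, j, h⟩ hx
    refine ⟨⟨i, j, hwU⟩, ⟨i, j, hwU, hxcase⟩, ?_⟩
    rw [N.deriv_one k x]
    exact hxw

end A1Network
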